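/- The inclusion order on convex hulls of finite sets of points in Q² is a universal partial order: every countable partial order embeds into it. -/

import Mathlib

namespace CHOU

def gam (t : ℚ) : ℚ := t - t^2

structure Zst where
  l : ℚ
  w : ℚ
  d : ℚ

def K (w : ℚ) : ℚ := w^2/4 + w^2/5000

def u2 (c : ℕ) : ℚ := ((2:ℚ)^c)⁻¹

lemma u2_pos (c : ℕ) : 0 < u2 c := by
  unfold u2; positivity

lemma u2_le_one (c : ℕ) : u2 c ≤ 1 := by
  unfold u2
  rw [inv_le_one_iff₀]
  right
  exact one_le_pow₀ (by norm_num)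

lemma u2_half {c c' : ℕ} (h : c < c') : u2 c' ≤ u2 c / 2 := by
  unfold u2
  have h2 : (2:ℚ)^c * 2 ≤ 2^c' := by
    calc (2:ℚ)^c * 2 = 2^(c+1) := by ring
    _ ≤ 2^c' := by exact pow_le_pow_right₀ (by norm_num) h
  have hp : (0:ℚ) < 2^c := by positivity
  calc ((2:ℚ)^c')⁻¹ ≤ ((2:ℚ)^c * 2)⁻¹ := by
        apply inv_anti₀ (by positivity) h2
  _ = ((2:ℚ)^c)⁻¹ / 2 := by rw [mul_inv]; ring

def zstep (z : Zst) (c : ℕ) : Zst :=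
  ⟨z.l + z.w/2 + z.w * u2 c / 100, z.w * u2 c / 10000, z.d + K z.w⟩

def zroot : Zst := ⟨1/3, 1/12, 0⟩

def Good (z : Zst) : Prop :=
  0 < z.w ∧ 1/3 ≤ z.l ∧ z.l + z.w ≤ 5/12 ∧ 0 ≤ z.d ∧ z.d + z.w^2 ≤ 1/144

lemma good_root : Good zroot := by
  refine ⟨?_, ?_, ?_, ?_, ?_⟩ <;> norm_num [zroot]

lemma good_step (z : Zst) (hz : Good z) (c : ℕ) : Good (zstep z c) := by
  obtain ⟨h1, h2, h3, h4, h5⟩ := hz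
  have hu := u2_pos c
  have hu1 := u2_le_one c
  have hwu : z.w * u2 c ≤ z.w := by nlinarith
  have hwu2 : (z.w * u2 c)^2 ≤ z.w^2 := pow_le_pow_left₀ (by positivity) hwu 2
  refine ⟨?_, ?_, ?_, ?_, ?_⟩ <;> simp only [zstep, K]
  · positivity
  · nlinarith
  · nlinarith
  · nlinarith
  · nlinarith

/-- nesting and potential facts for one step -/
lemma step_nest (z : Zst) (hz : Good z) (c : ℕ) :
    z.l ≤ (zstep z c).l ∧ (zstep z c).l + (zstep z c).w ≤ z.l + z.w ∧
    z.d ≤ (zstep z c).d ∧ (zstep z c).d + (zstep z c).w^2 ≤ z.d + z.w^2 := by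
  obtain ⟨h1, h2, h3, h4, h5⟩ := hz
  have hu := u2_pos c
  have hu1 := u2_le_one c
  have hwu : z.w * u2 c ≤ z.w := by nlinarith
  have hwu2 : (z.w * u2 c)^2 ≤ z.w^2 := pow_le_pow_left₀ (by positivity) hwu 2
  refine ⟨?_, ?_, ?_, ?_⟩ <;> simp only [zstep, K] <;> nlinarith

end CHOU

namespace CHOU

def zrun (z : Zst) (L : List ℕ) : Zst := L.foldl zstep z

lemma zrun_nil (z : Zst) : zrun z [] = z := rfl

lemma zrun_cons (z : Zst) (c : ℕ) (L : List ℕ) : zrun z (c :: L) = zrun (zstep z c) L := rfl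

lemma zrun_append (z : Zst) (L1 L2 : List ℕ) : zrun z (L1 ++ L2) = zrun (zrun z L1) L2 :=
  List.foldl_append

lemma good_zrun (z : Zst) (hz : Good z) (L : List ℕ) : Good (zrun z L) := by
  induction L generalizing z with
  | nil => exact hz
  | cons c L ih => exact ih _ (good_step z hz c)

/-- interval nesting, depth monotonicity, and the potential bound along a run. -/
lemma zrun_nest (z : Zst) (hz : Good z) (L : List ℕ) :
    z.l ≤ (zrun z L).l ∧ (zrun z L).l + (zrun z L).w ≤ z.l + z.w ∧
    z.d ≤ (zrun z L).d ∧ (zrun z L).d + (zrun z L).w^2 ≤ z.d + z.w^2 := by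
  induction L generalizing z with
  | nil => exact ⟨le_refl _, le_refl _, le_refl _, le_refl _⟩
  | cons c L ih =>
    obtain ⟨a1, a2, a3, a4⟩ := step_nest z hz c
    obtain ⟨b1, b2, b3, b4⟩ := ih (zstep z c) (good_step z hz c)
    rw [zrun_cons]
    exact ⟨le_trans a1 b1, le_trans b2 a2, le_trans a3 b3, le_trans b4 a4⟩

end CHOU

namespace CHOU

@[simp] lemma zstep_l (z : Zst) (c : ℕ) : (zstep z c).l = z.l + z.w/2 + z.w * u2 c / 100 := rfl
@[simp] lemma zstep_w (z : Zst) (c : ℕ) : (zstep z c).w = z.w * u2 c / 10000 := rfl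
@[simp] lemma zstep_d (z : Zst) (c : ℕ) : (zstep z c).d = z.d + K z.w := rfl

lemma gam_lb {a : ℚ} (h1 : 1/3 ≤ a) (h2 : a ≤ 5/12) : 2/9 ≤ gam a := by
  unfold gam; nlinarith [mul_nonneg (by linarith : (0:ℚ) ≤ a - 1/3) (by linarith : (0:ℚ) ≤ 2/3 - a)]

/-- coverage: any point of a zone strictly below an ancestor zone is beneath the
ancestor's bracket chord and above the baseline. -/
lemma cov_est (z : Zst) (hz : Good z) (c : ℕ) (T : List ℕ) (a : ℚ)
    (hal : (zrun z (c::T)).l ≤ a) (har : a ≤ (zrun z (c::T)).l + (zrun z (c::T)).w) :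
    z.l ≤ a ∧ a ≤ z.l + z.w ∧
    (a - z.l) * (z.l + z.w - a) + z.d ≤ (zrun z (c::T)).d ∧
    0 ≤ gam a - (zrun z (c::T)).d := by
  have hgs := good_step z hz c
  have hg' := good_zrun _ hgs T
  obtain ⟨n1, n2, n3, n4⟩ := zrun_nest (zstep z c) hgs T
  rw [zrun_cons] at hal har ⊢
  set z' := zrun (zstep z c) T with hz'
  obtain ⟨h1, h2, h3, h4, h5⟩ := hz
  obtain ⟨g1, g2, g3, g4, g5⟩ := hg'
  have hu := u2_pos c
  have hu1 := u2_le_one c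
  rw [zstep_l] at n1
  rw [zstep_l, zstep_w] at n2
  rw [zstep_d] at n3
  have hax1 : z.l ≤ a := by nlinarith
  have hax2 : a ≤ z.l + z.w := by nlinarith
  refine ⟨hax1, hax2, ?_, ?_⟩
  · have hsag : (a - z.l) * (z.l + z.w - a) ≤ z.w^2/4 := by
      nlinarith [sq_nonneg ((a - z.l) - (z.l + z.w - a))]
    have : z.w^2/4 < K z.w := by unfold K; nlinarith
    linarith
  · have hga : 2/9 ≤ gam a := gam_lb (by linarith) (by linarith)
    have : z'.d ≤ 1/144 := by nlinarith
    linarith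

lemma gap_arith {w uA uB aA aB : ℚ} (hw : 0 < w) (huA : 0 < uA) (huB : 0 < uB)
    (hhalf : uB ≤ uA/2)
    (hAl : w * uA/100 ≤ aA)
    (hBr : aB ≤ w*uB/100 + w*uB/10000) :
    w * uA/250 ≤ aA - aB := by nlinarith

set_option maxHeartbeats 1000000 in
/-- separation estimate at a divergence. -/
lemma escape_est (z : Zst) (hz : Good z) {c1 c2 : ℕ} (hne : c1 ≠ c2) (T1 T2 : List ℕ)
    (a1 a2 : ℚ)
    (h1l : (zrun z (c1::T1)).l ≤ a1) (h1r : a1 ≤ (zrun z (c1::T1)).l + (zrun z (c1::T1)).w)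
    (h2l : (zrun z (c2::T2)).l ≤ a2) (h2r : a2 ≤ (zrun z (c2::T2)).l + (zrun z (c2::T2)).w) :
    (zrun z (c1::T1)).d - (zrun z (c2::T2)).d < (a1 - a2)^2 := by
  have hgs1 := good_step z hz c1
  have hgs2 := good_step z hz c2
  obtain ⟨m1, m2, m3, m4⟩ := zrun_nest (zstep z c1) hgs1 T1
  obtain ⟨n1, n2, n3, n4⟩ := zrun_nest (zstep z c2) hgs2 T2
  simp only [zrun_cons] at h1l h1r h2l h2r ⊢
  obtain ⟨h1, h2, h3, h4, h5⟩ := hz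
  have hu1 := u2_pos c1
  have hu2 := u2_pos c2
  rw [zstep_l] at m1 n1
  rw [zstep_l, zstep_w] at m2 n2
  rw [zstep_d] at m3 n3
  rw [zstep_d, zstep_w] at m4 n4
  -- relative abscissas
  set L := z.l + z.w/2 with hL
  have A1l : L + z.w * u2 c1/100 ≤ a1 := le_trans m1 h1l
  have A1r : a1 ≤ L + z.w * u2 c1/100 + z.w * u2 c1/10000 := by
    have := le_trans h1r m2; linarith
  have A2l : L + z.w * u2 c2/100 ≤ a2 := le_trans n1 h2l
  have A2r : a2 ≤ L + z.w * u2 c2/100 + z.w * u2 c2/10000 := by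
    have := le_trans h2r n2; linarith
  -- depth bounds
  have D1 : (zrun (zstep z c1) T1).d ≤ z.d + K z.w + (z.w * u2 c1 / 10000)^2 := by
    have h := sq_nonneg (zrun (zstep z c1) T1).w
    linarith
  have D2 : z.d + K z.w ≤ (zrun (zstep z c2) T2).d := n3
  -- gap estimate
  have hgap2 : (z.w * u2 c1 / 250)^2 ≤ (a1 - a2)^2 := by
    have h0 : (0:ℚ) ≤ z.w * u2 c1 / 250 := by positivity
    have hgap : z.w * u2 c1 / 250 ≤ |a1 - a2| := by
      rcases lt_or_gt_of_ne hne with hlt | hgt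
      · have hh := u2_half hlt
        have hgg : z.w * u2 c1/250 ≤ (a1 - L) - (a2 - L) :=
          gap_arith h1 hu1 hu2 hh (by linarith) (by linarith)
        calc z.w * u2 c1 / 250 ≤ a1 - a2 := by linarith
        _ ≤ |a1 - a2| := le_abs_self _
      · have hh := u2_half hgt
        have hle : u2 c1 ≤ u2 c2 := by linarith [u2_pos c1]
        have hgg : z.w * u2 c2/250 ≤ (a2 - L) - (a1 - L) :=
          gap_arith h1 hu2 hu1 hh (by linarith) (by linarith)
        have hmm : z.w * u2 c1 ≤ z.w * u2 c2 := mul_le_mul_of_nonneg_left hle (le_of_lt h1)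
        have : z.w * u2 c1/250 ≤ a2 - a1 := by linarith
        calc z.w * u2 c1 / 250 ≤ a2 - a1 := this
        _ ≤ |a1 - a2| := by rw [abs_sub_comm]; exact le_abs_self _
    calc (z.w * u2 c1 / 250)^2 ≤ |a1 - a2|^2 := pow_le_pow_left₀ h0 hgap 2
    _ = (a1 - a2)^2 := sq_abs _
  have hfin : (z.w * u2 c1 / 10000)^2 < (z.w * u2 c1 / 250)^2 := by
    have h0 : (0:ℚ) < z.w * u2 c1 := by positivity
    nlinarith
  linarith

end CHOU

namespace CHOU

lemma comb_mem {S : Set (ℚ×ℚ)} {p q : ℚ×ℚ} (hp : p ∈ S) (hq : q ∈ S) {t1 t2 : ℚ}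
    (h1 : 0 ≤ t1) (h2 : 0 ≤ t2) (h12 : t1 + t2 = 1) :
    t1 • p + t2 • q ∈ convexHull ℚ S :=
  (convex_convexHull ℚ S) (subset_convexHull ℚ S hp) (subset_convexHull ℚ S hq) h1 h2 h12

lemma mem_quad {S : Set (ℚ × ℚ)} {l r dd a D : ℚ}
    (hlr : l < r) (h0l : 0 ≤ l) (hr1 : r ≤ 1)
    (hla : l ≤ a) (har : a ≤ r)
    (hD : (a - l) * (r - a) + dd ≤ D) (hpos : 0 ≤ gam a - D)
    (h1 : (l, gam l - dd) ∈ S) (h2 : (r, gam r - dd) ∈ S)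
    (h3 : ((0:ℚ), (0:ℚ)) ∈ S) (h4 : ((1:ℚ), (0:ℚ)) ∈ S) :
    (a, gam a - D) ∈ convexHull ℚ S := by
  have hb : (a, (0:ℚ)) ∈ convexHull ℚ S := by
    have hcomb := comb_mem h3 h4 (t1 := 1 - a) (t2 := a)
      (by linarith) (by linarith) (by ring)
    have heq : (1 - a) • (((0:ℚ), (0:ℚ)) : ℚ×ℚ) + a • (((1:ℚ), (0:ℚ)) : ℚ×ℚ) = (a, (0:ℚ)) := by
      simp [Prod.ext_iff, smul_eq_mul]
    rwa [heq] at hcomb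
  have hrl : (0:ℚ) < r - l := by linarith
  have hc : (a, gam a - (a - l)*(r - a) - dd) ∈ convexHull ℚ S := by
    have hcomb := comb_mem h1 h2 (t1 := (r - a)/(r - l)) (t2 := (a - l)/(r - l))
      (div_nonneg (by linarith) (by linarith)) (div_nonneg (by linarith) (by linarith)) (by field_simp; ring)
    have heq : ((r - a)/(r - l)) • ((l, gam l - dd) : ℚ×ℚ) + ((a - l)/(r - l)) • ((r, gam r - dd) : ℚ×ℚ)
        = (a, gam a - (a - l)*(r - a) - dd) := by
      simp only [Prod.ext_iff, Prod.smul_mk, Prod.mk_add_mk, smul_eq_mul]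
      constructor
      · field_simp; ring
      · unfold gam; field_simp; ring
    rwa [heq] at hcomb
  set yc := gam a - (a - l)*(r - a) - dd with hyc
  set yp := gam a - D with hyp
  have hyple : yp ≤ yc := by simp only [hyc, hyp]; linarith
  have hyp0 : 0 ≤ yp := hpos
  rcases eq_or_lt_of_le (le_trans hyp0 hyple) with hc0 | hc0
  · have hyp0' : yp = 0 := le_antisymm (hc0 ▸ hyple) hyp0
    rw [show ((a, yp) : ℚ×ℚ) = (a, (0:ℚ)) by rw [hyp0']]
    exact hb
  · have ht2 : 0 ≤ yp/yc := by positivity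
    have ht1 : 0 ≤ 1 - yp/yc := by
      have : yp/yc ≤ 1 := by rw [div_le_one hc0]; exact hyple
      linarith
    have hcomb := (convex_convexHull ℚ S) hb hc ht1 ht2 (by ring)
    have heq : (1 - yp/yc) • ((a, (0:ℚ)) : ℚ×ℚ) + (yp/yc) • ((a, yc) : ℚ×ℚ) = (a, yp) := by
      simp only [Prod.ext_iff, Prod.smul_mk, Prod.mk_add_mk, smul_eq_mul]
      constructor
      · ring
      · field_simp; ring
    rwa [heq] at hcomb

lemma tangent_pt {a b Δ D : ℚ} (h : Δ - D < (a - b)^2) :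
    (gam b - D) - (1 - 2*a)*b < (gam a - Δ) - (1 - 2*a)*a := by
  have hid : ((gam a - Δ) - (1 - 2*a)*a) - ((gam b - D) - (1 - 2*a)*b)
      = (a - b)^2 - (Δ - D) := by unfold gam; ring
  linarith

lemma sep_line {S : Set (ℚ × ℚ)} {a Δ : ℚ}
    (h : ∀ p ∈ S, p.2 - (1 - 2*a) * p.1 < (gam a - Δ) - (1 - 2*a) * a) :
    (a, gam a - Δ) ∉ convexHull ℚ S := by
  intro hmem
  have hlin : IsLinearMap ℚ (fun p : ℚ×ℚ => p.2 - (1 - 2*a) * p.1) := by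
    constructor
    · intro p q; simp only [Prod.fst_add, Prod.snd_add]; ring
    · intro c p; simp only [Prod.smul_fst, Prod.smul_snd, smul_eq_mul]; ring
  have hconv : Convex ℚ {p : ℚ × ℚ | p.2 - (1 - 2*a) * p.1 < (gam a - Δ) - (1 - 2*a) * a} :=
    convex_halfSpace_lt hlin _
  have hsub : convexHull ℚ S ⊆ {p : ℚ × ℚ | p.2 - (1 - 2*a) * p.1 < (gam a - Δ) - (1 - 2*a) * a} :=
    convexHull_min (fun p hp => h p hp) hconv
  have h2 : (gam a - Δ) - (1 - 2*a) * a < (gam a - Δ) - (1 - 2*a) * a := hsub hmem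
  linarith

end CHOU

namespace CHOU

lemma list_dichotomy (L1 L2 : List ℕ) :
    L1 <+: L2 ∨ L2 <+: L1 ∨
      ∃ C c1 c2 T1 T2, L1 = C ++ c1 :: T1 ∧ L2 = C ++ c2 :: T2 ∧ c1 ≠ c2 := by
  induction L1 generalizing L2 with
  | nil => exact Or.inl List.nil_prefix
  | cons a T ih =>
    cases L2 with
    | nil => exact Or.inr (Or.inl List.nil_prefix)
    | cons b T2 =>
      by_cases hab : a = b
      · subst hab
        rcases ih T2 with h | h | ⟨C, c1, c2, T1', T2', h1, h2, hne⟩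
        · exact Or.inl (List.cons_prefix_cons.mpr ⟨rfl, h⟩)
        · exact Or.inr (Or.inl (List.cons_prefix_cons.mpr ⟨rfl, h⟩))
        · exact Or.inr (Or.inr ⟨a :: C, c1, c2, T1', T2', by simp [h1], by simp [h2], hne⟩)
      · exact Or.inr (Or.inr ⟨[], a, b, T, T2, rfl, rfl, hab⟩)

lemma prefix_lastodd {E1 E2 : List ℕ} {o1 o2 : ℕ}
    (hE2 : ∀ c ∈ E2, Even c) (ho1 : ¬ Even o1)
    (h : (E1 ++ [o1]) <+: (E2 ++ [o2])) : E1 ++ [o1] = E2 ++ [o2] := by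
  obtain ⟨t, ht⟩ := h
  rcases List.eq_nil_or_concat t with rfl | ⟨t', z, rfl⟩
  · simpa using ht
  · exfalso
    have ht' : (E1 ++ o1 :: t') ++ [z] = E2 ++ [o2] := by
      rw [← ht]; simp
    obtain ⟨h1, _⟩ := List.append_inj' ht' rfl
    have : o1 ∈ E2 := by rw [← h1]; simp
    exact ho1 (hE2 _ this)

end CHOU

namespace CHOU

section Main

variable {P : Type} [PartialOrder P]
variable (e : ℕ → P) (he : Function.Surjective e)

noncomputable def m (x : P) : ℕ := @Nat.find (fun n => e n = x) (Classical.decPred _) (he x)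

lemma e_m (x : P) : e (m e he x) = x := @Nat.find_spec (fun n => e n = x) (Classical.decPred _) (he x)

lemma m_le {x : P} {n : ℕ} (h : e n = x) : m e he x ≤ n :=
  @Nat.find_min' (fun n => e n = x) (Classical.decPred _) (he x) n h

lemma m_inj {x y : P} (h : m e he x = m e he y) : x = y := by
  have hx := e_m e he x
  have hy := e_m e he y
  rw [← hx, ← hy, h]

/-- `s` is an arrival stage. -/
def arr (s : ℕ) : Prop := m e he (e s) = s

lemma arr_m (x : P) : arr e he (m e he x) := by
  unfold arr; rw [e_m e he x]

open Classical in
/-- placed uppers of `x` by stage `j`, as a set of stages. -/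
noncomputable def pat (x : P) (j : ℕ) : Finset ℕ :=
  (Finset.range (j+1)).filter (fun s => arr e he s ∧ x ≤ e s)

lemma pat_mem {x : P} {j s : ℕ} :
    s ∈ pat e he x j ↔ s ≤ j ∧ arr e he s ∧ x ≤ e s := by
  classical
  unfold pat
  simp only [Finset.mem_filter, Finset.mem_range, Nat.lt_succ_iff]

def codeZ (A : Finset ℕ) (s : ℕ) : ℕ := 2 * Nat.pair s (Encodable.encode (A.filter (fun t => t ≤ s)))

lemma codeZ_even {A : Finset ℕ} {s : ℕ} : Even (codeZ A s) := by
  unfold codeZ; exact ⟨_, (two_mul _)⟩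

lemma codeZ_inj {A B : Finset ℕ} {s t : ℕ} (h : codeZ A s = codeZ B t) :
    s = t ∧ A.filter (fun u => u ≤ s) = B.filter (fun u => u ≤ s) := by
  unfold codeZ at h
  have h2 := Nat.eq_of_mul_eq_mul_left (by norm_num : 0 < 2) h
  have hp := Nat.pair_eq_pair.mp h2
  refine ⟨hp.1, ?_⟩
  have := hp.2
  have h3 := Encodable.encode_injective this
  rw [← hp.1] at h3
  exact h3

def chA (A : Finset ℕ) (j : ℕ) : List ℕ :=
  ((List.range (j+1)).filter (fun s => decide (s ∈ A))).map (codeZ A)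

lemma chA_even {A : Finset ℕ} {j : ℕ} : ∀ c ∈ chA A j, Even c := by
  intro c hc
  unfold chA at hc
  simp only [List.mem_map] at hc
  obtain ⟨s, _, rfl⟩ := hc
  exact codeZ_even

lemma chA_succ (A : Finset ℕ) (j : ℕ) :
    chA A (j+1) = chA A j ++ (if j+1 ∈ A then [codeZ A (j+1)] else []) := by
  unfold chA
  rw [List.range_succ, List.filter_append, List.map_append]
  congr 1
  by_cases h : j+1 ∈ A <;> simp [h]

lemma chA_mem_iff {A : Finset ℕ} {j : ℕ} {c : ℕ} :
    c ∈ chA A j ↔ ∃ s, s ≤ j ∧ s ∈ A ∧ codeZ A s = c := by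
  unfold chA
  simp only [List.mem_map, List.mem_filter, List.mem_range, Nat.lt_succ_iff, decide_eq_true_eq]
  constructor
  · rintro ⟨s, ⟨hs1, hs2⟩, rfl⟩; exact ⟨s, hs1, hs2, rfl⟩
  · rintro ⟨s, hs1, hs2, rfl⟩; exact ⟨s, ⟨hs1, hs2⟩, rfl⟩

lemma chA_prefix {A : Finset ℕ} {j1 j2 : ℕ} (h : j1 ≤ j2) : chA A j1 <+: chA A j2 := by
  induction j2 with
  | zero => rw [Nat.le_zero.mp h]
  | succ j ih =>
    rcases Nat.lt_succ_iff_lt_or_eq.mp (Nat.lt_succ_of_le h) with h' | h'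
    · have := ih (Nat.lt_succ_iff.mp h')
      calc chA A j1 <+: chA A j := this
      _ <+: chA A (j+1) := ⟨_, (chA_succ A j).symm⟩
    · rw [h']

end Main

end CHOU

namespace CHOU

lemma filter_le_congr {A B : Finset ℕ} {j : ℕ}
    (h : A.filter (fun t => t ≤ j) = B.filter (fun t => t ≤ j)) {s : ℕ} (hs : s ≤ j) :
    A.filter (fun t => t ≤ s) = B.filter (fun t => t ≤ s) := by
  ext u
  have hu := Finset.ext_iff.mp h u
  simp only [Finset.mem_filter] at hu ⊢
  constructor
  · rintro ⟨h1, h2⟩; exact ⟨(hu.mp ⟨h1, le_trans h2 hs⟩).1, h2⟩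
  · rintro ⟨h1, h2⟩; exact ⟨(hu.mpr ⟨h1, le_trans h2 hs⟩).1, h2⟩

lemma chA_congr {A B : Finset ℕ} {j : ℕ}
    (h : A.filter (fun t => t ≤ j) = B.filter (fun t => t ≤ j)) :
    chA A j = chA B j := by
  unfold chA
  have h1 : (List.range (j+1)).filter (fun s => decide (s ∈ A))
      = (List.range (j+1)).filter (fun s => decide (s ∈ B)) := by
    apply List.filter_congr
    intro s hs
    rw [List.mem_range, Nat.lt_succ_iff] at hs
    have hu := Finset.ext_iff.mp h s
    simp only [Finset.mem_filter] at hu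
    apply decide_eq_decide.mpr
    constructor
    · intro hA; exact (hu.mp ⟨hA, hs⟩).1
    · intro hB; exact (hu.mpr ⟨hB, hs⟩).1
  rw [h1]
  apply List.map_congr_left
  intro s hs
  rw [List.mem_filter, List.mem_range, Nat.lt_succ_iff] at hs
  unfold codeZ
  rw [filter_le_congr h hs.1]

section Main2

variable {P : Type} [PartialOrder P]
variable (e : ℕ → P) (he : Function.Surjective e)

noncomputable def lcode (x : P) : ℕ := 2 * (m e he x) + 1

lemma lcode_odd (x : P) : ¬ Even (lcode e he x) := by
  unfold lcode
  simp [Nat.even_add_one, Nat.even_mul]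

noncomputable def chX (x : P) : List ℕ :=
  chA (pat e he x (m e he x)) (m e he x) ++ [lcode e he x]

noncomputable def zX (x : P) : Zst := zrun zroot (chX e he x)

noncomputable def q (x : P) : ℚ × ℚ :=
  ((zX e he x).l, gam (zX e he x).l - (zX e he x).d)

def valid (j : ℕ) (A : Finset ℕ) : Prop :=
  (∀ s ∈ A, s ≤ j ∧ arr e he s) ∧
  (∀ s ∈ A, ∀ t, t ≤ j → arr e he t → e s ≤ e t → t ∈ A)

open Classical in
noncomputable def nodes (y : P) : Finset (ℕ × Finset ℕ) :=
  ((Finset.range (m e he y + 1)) ×ˢ (Finset.range (m e he y + 1)).powerset).filter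
    (fun pr => valid e he pr.1 pr.2 ∧ ∃ s ∈ pr.2, e s ≤ y)

noncomputable def nzone (pr : ℕ × Finset ℕ) : Zst := zrun zroot (chA pr.2 pr.1)

noncomputable def brk (z : Zst) : Finset (ℚ × ℚ) :=
  {(z.l, gam z.l - z.d), (z.l + z.w, gam (z.l + z.w) - z.d)}

open Classical in
noncomputable def lows (y : P) : Finset ℕ :=
  (Finset.range (m e he y + 1)).filter (fun s => arr e he s ∧ e s ≤ y)

lemma lows_mem {y : P} {s : ℕ} :
    s ∈ lows e he y ↔ s ≤ m e he y ∧ arr e he s ∧ e s ≤ y := by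
  classical
  unfold lows
  simp only [Finset.mem_filter, Finset.mem_range, Nat.lt_succ_iff]

lemma nodes_mem {y : P} {pr : ℕ × Finset ℕ} :
    pr ∈ nodes e he y ↔ pr.1 ≤ m e he y ∧ pr.2 ⊆ Finset.range (m e he y + 1) ∧
      valid e he pr.1 pr.2 ∧ ∃ s ∈ pr.2, e s ≤ y := by
  classical
  unfold nodes
  simp only [Finset.mem_filter, Finset.mem_product, Finset.mem_range, Finset.mem_powerset,
    Nat.lt_succ_iff]
  tauto

noncomputable def phi (y : P) : Finset (ℚ × ℚ) :=
  ({((0:ℚ), (0:ℚ)), ((1:ℚ), (0:ℚ))} : Finset (ℚ×ℚ))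
    ∪ (lows e he y).image (fun s => q e he (e s))
    ∪ (nodes e he y).biUnion (fun pr => brk (nzone pr))

end Main2

end CHOU

namespace CHOU

lemma chA_split_strict {A : Finset ℕ} {j1 j2 s0 : ℕ} (h12 : j1 ≤ j2) (hs0 : s0 ∈ A)
    (h1 : j1 < s0) (h2 : s0 ≤ j2) :
    ∃ c T, chA A j2 = chA A j1 ++ c :: T := by
  obtain ⟨t, ht⟩ := chA_prefix (A := A) h12
  cases t with
  | nil =>
    exfalso
    have hmem : codeZ A s0 ∈ chA A j2 := chA_mem_iff.mpr ⟨s0, h2, hs0, rfl⟩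
    rw [← ht] at hmem
    simp only [List.append_nil] at hmem
    obtain ⟨s, hs1, _, hs3⟩ := chA_mem_iff.mp hmem
    obtain ⟨hss, _⟩ := codeZ_inj hs3
    omega
  | cons c T => exact ⟨c, T, ht.symm⟩

section Main3

variable {P : Type} [PartialOrder P]
variable (e : ℕ → P) (he : Function.Surjective e)

lemma anchor0_mem (y : P) : ((0:ℚ), (0:ℚ)) ∈ phi e he y := by
  unfold phi
  apply Finset.mem_union_left
  apply Finset.mem_union_left
  simp

lemma anchor1_mem (y : P) : ((1:ℚ), (0:ℚ)) ∈ phi e he y := by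
  unfold phi
  apply Finset.mem_union_left
  apply Finset.mem_union_left
  simp

lemma q_mem_phi {y : P} {s : ℕ} (hs : s ∈ lows e he y) : q e he (e s) ∈ phi e he y := by
  unfold phi
  apply Finset.mem_union_left
  apply Finset.mem_union_right
  exact Finset.mem_image_of_mem _ hs

lemma brk_mem_phi {y : P} {pr : ℕ × Finset ℕ} (hpr : pr ∈ nodes e he y) :
    brk (nzone pr) ⊆ phi e he y := by
  intro p hp
  unfold phi
  apply Finset.mem_union_right
  exact Finset.mem_biUnion.mpr ⟨pr, hpr, hp⟩

lemma qx_mem (x : P) : q e he x ∈ phi e he x := by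
  have : m e he x ∈ lows e he x := by
    rw [lows_mem]
    exact ⟨le_refl _, arr_m e he x, by rw [e_m e he x]⟩
  have h := q_mem_phi e he this
  rwa [e_m e he x] at h

lemma phi_cases {y : P} {p : ℚ × ℚ} (hp : p ∈ phi e he y) :
    p = ((0:ℚ), (0:ℚ)) ∨ p = ((1:ℚ), (0:ℚ)) ∨
    (∃ s ∈ lows e he y, p = q e he (e s)) ∨
    ∃ pr ∈ nodes e he y, p ∈ brk (nzone pr) := by
  unfold phi at hp
  rcases Finset.mem_union.mp hp with h | h
  · rcases Finset.mem_union.mp h with h' | h'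
    · simp only [Finset.mem_insert, Finset.mem_singleton] at h'
      tauto
    · obtain ⟨s, hs, hq⟩ := Finset.mem_image.mp h'
      exact Or.inr (Or.inr (Or.inl ⟨s, hs, hq.symm⟩))
  · obtain ⟨pr, hpr, hb⟩ := Finset.mem_biUnion.mp h
    exact Or.inr (Or.inr (Or.inr ⟨pr, hpr, hb⟩))

lemma good_zX (x : P) : Good (zX e he x) := good_zrun _ good_root _

lemma good_nzone (pr : ℕ × Finset ℕ) : Good (nzone pr) := good_zrun _ good_root _

/-- the two bracket points of a zone, described uniformly. -/
lemma brk_cases {z : Zst} {p : ℚ × ℚ} (hp : p ∈ brk z) :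
    ∃ b, (b = z.l ∨ b = z.l + z.w) ∧ p = (b, gam b - z.d) := by
  unfold brk at hp
  simp only [Finset.mem_insert, Finset.mem_singleton] at hp
  rcases hp with h | h
  · exact ⟨z.l, Or.inl rfl, h⟩
  · exact ⟨z.l + z.w, Or.inr rfl, h⟩

end Main3

end CHOU

namespace CHOU

section Main4

variable {P : Type} [PartialOrder P]
variable (e : ℕ → P) (he : Function.Surjective e)

lemma pat_valid (x : P) (j : ℕ) : valid e he j (pat e he x j) := by
  constructor
  · intro s hs
    obtain ⟨h1, h2, _⟩ := (pat_mem e he).mp hs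
    exact ⟨h1, h2⟩
  · intro s hs t htj hat hle
    obtain ⟨h1, h2, h3⟩ := (pat_mem e he).mp hs
    exact (pat_mem e he).mpr ⟨htj, hat, le_trans h3 hle⟩

lemma filter_idem (A : Finset ℕ) (j : ℕ) :
    (A.filter (fun t => t ≤ j)).filter (fun t => t ≤ j) = A.filter (fun t => t ≤ j) := by
  ext u; simp only [Finset.mem_filter]; tauto

lemma cover_node {y : P} {j : ℕ} {A : Finset ℕ} (hv : valid e he j A)
    {s0 : ℕ} (hs0 : s0 ∈ A) (hs0y : e s0 ≤ y) (hj : m e he y < j) :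
    (m e he y, A.filter (fun t => t ≤ m e he y)) ∈ nodes e he y ∧
    m e he y ∈ A ∧
    chA (A.filter (fun t => t ≤ m e he y)) (m e he y) = chA A (m e he y) := by
  have hmyA : m e he y ∈ A := by
    apply hv.2 s0 hs0 (m e he y) (le_of_lt hj) (arr_m e he y)
    rw [e_m e he y]; exact hs0y
  refine ⟨?_, hmyA, ?_⟩
  · rw [nodes_mem]
    refine ⟨le_refl _, ?_, ⟨?_, ?_⟩, ?_⟩
    · intro s hs
      rw [Finset.mem_filter] at hs
      rw [Finset.mem_range, Nat.lt_succ_iff]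
      exact hs.2
    · intro s hs
      rw [Finset.mem_filter] at hs
      exact ⟨hs.2, (hv.1 s hs.1).2⟩
    · intro s hs t htj hat hle
      rw [Finset.mem_filter] at hs ⊢
      exact ⟨hv.2 s hs.1 t (le_trans htj (le_of_lt hj)) hat hle, htj⟩
    · refine ⟨m e he y, ?_, ?_⟩
      · rw [Finset.mem_filter]; exact ⟨hmyA, le_refl _⟩
      · rw [e_m e he y]
  · exact chA_congr (filter_idem A (m e he y))

/-- late structures are below the covering node's bracket chord. -/
lemma late_mem_hull {y : P} {LL : List ℕ} {z : Zst} {cc : ℕ} {TT : List ℕ}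
    (hz : z = zrun zroot LL) (hprz : ∃ pr ∈ nodes e he y, nzone pr = z)
    {b D : ℚ}
    (hbl : (zrun z (cc :: TT)).l ≤ b) (hbr : b ≤ (zrun z (cc :: TT)).l + (zrun z (cc :: TT)).w)
    (hD : D = (zrun z (cc :: TT)).d) :
    (b, gam b - D) ∈ convexHull ℚ (phi e he y : Set (ℚ × ℚ)) := by
  have hgood : Good z := by rw [hz]; exact good_zrun _ good_root _
  obtain ⟨hc1, hc2, hc3, hc4⟩ := cov_est z hgood cc TT b hbl hbr
  obtain ⟨g1, g2, g3, g4, g5⟩ := hgood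
  obtain ⟨pr, hpr, hprz'⟩ := hprz
  have hBL : (z.l, gam z.l - z.d) ∈ phi e he y := by
    apply brk_mem_phi e he hpr
    rw [hprz']
    unfold brk
    exact Finset.mem_insert_self _ _
  have hBR : (z.l + z.w, gam (z.l + z.w) - z.d) ∈ phi e he y := by
    apply brk_mem_phi e he hpr
    rw [hprz']
    unfold brk
    exact Finset.mem_insert_of_mem (Finset.mem_singleton_self _)
  rw [hD]
  exact mem_quad (by linarith) (by linarith) (by linarith) hc1 hc2 hc3 hc4
    (Finset.mem_coe.mpr hBL) (Finset.mem_coe.mpr hBR)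
    (Finset.mem_coe.mpr (anchor0_mem e he y)) (Finset.mem_coe.mpr (anchor1_mem e he y))

end Main4

end CHOU

namespace CHOU

section Main5

variable {P : Type} [PartialOrder P]
variable (e : ℕ → P) (he : Function.Surjective e)

lemma forward {x y : P} (hxy : x ≤ y) :
    (phi e he x : Set (ℚ×ℚ)) ⊆ convexHull ℚ (phi e he y : Set (ℚ×ℚ)) := by
  intro p hp
  rcases phi_cases e he (Finset.mem_coe.mp hp) with h | h | ⟨s, hs, rfl⟩ | ⟨pr, hpr, hb⟩
  · subst h; exact subset_convexHull _ _ (Finset.mem_coe.mpr (anchor0_mem e he y))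
  · subst h; exact subset_convexHull _ _ (Finset.mem_coe.mpr (anchor1_mem e he y))
  · -- leaf point of a lower u = e s
    obtain ⟨hsx, hars, hux⟩ := (lows_mem e he).mp hs
    by_cases hsy : s ≤ m e he y
    · apply subset_convexHull
      apply Finset.mem_coe.mpr
      exact q_mem_phi e he ((lows_mem e he).mpr ⟨hsy, hars, le_trans hux hxy⟩)
    · -- late leaf
      push_neg at hsy
      set u := e s with hu
      have hmu : m e he u = s := hars
      set A := pat e he u (m e he u) with hA
      have hmuA : m e he u ∈ A := by
        rw [hA, pat_mem]
        exact ⟨le_refl _, arr_m e he u, by rw [e_m e he u]⟩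
      have hjy : m e he y < m e he u := by rw [hmu]; exact hsy
      have hs0y : e (m e he u) ≤ y := by rw [e_m e he u]; exact le_trans hux hxy
      obtain ⟨hnode, hmyA, hcongr⟩ := cover_node e he (y := y)
        (pat_valid e he u (m e he u)) hmuA hs0y hjy
      obtain ⟨cc, TT, hsplit⟩ := chA_split_strict (A := A)
        (le_of_lt hjy) hmuA hjy (le_refl _)
      set z := zrun zroot (chA A (m e he y)) with hz
      have hgz : Good z := good_zrun _ good_root _
      have hzX : zX e he u = zrun z (cc :: (TT ++ [lcode e he u])) := by
        rw [zX, chX, ← hA, hsplit, hz]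
        rw [List.append_assoc, zrun_append]
        rfl
      have hprz : ∃ prc ∈ nodes e he y, nzone prc = z := by
        refine ⟨_, hnode, ?_⟩
        unfold nzone
        dsimp only
        rw [hcongr, hz]
      have hq : q e he (e s) = ((zX e he u).l, gam (zX e he u).l - (zX e he u).d) := rfl
      rw [hq]
      have hgood' : Good (zX e he u) := good_zX e he u
      refine late_mem_hull e he (cc := cc) (TT := TT ++ [lcode e he u]) hz hprz ?_ ?_ ?_
      · rw [← hzX]
      · rw [← hzX]; linarith [hgood'.1]
      · rw [← hzX]
  · -- bracket points
    obtain ⟨hj, hsub, hv, s0, hs0, hs0x⟩ := (nodes_mem e he).mp hpr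
    by_cases hjy : pr.1 ≤ m e he y
    · apply subset_convexHull
      apply Finset.mem_coe.mpr
      apply brk_mem_phi e he ?_ hb
      rw [nodes_mem]
      refine ⟨hjy, ?_, hv, s0, hs0, le_trans hs0x hxy⟩
      intro t ht
      rw [Finset.mem_range, Nat.lt_succ_iff]
      exact le_trans (hv.1 t ht).1 hjy
    · push_neg at hjy
      obtain ⟨hnode, hmyA, hcongr⟩ := cover_node e he (y := y) hv hs0 (le_trans hs0x hxy) hjy
      set z := zrun zroot (chA pr.2 (m e he y)) with hz
      have hprz : ∃ prc ∈ nodes e he y, nzone prc = z := by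
        refine ⟨_, hnode, ?_⟩
        unfold nzone
        dsimp only
        rw [hcongr, hz]
      obtain ⟨t, ht⟩ := chA_prefix (A := pr.2) (le_of_lt hjy)
      cases t with
      | nil =>
        apply subset_convexHull
        apply Finset.mem_coe.mpr
        obtain ⟨prc, hprc, hprcz⟩ := hprz
        apply brk_mem_phi e he hprc
        have heq : nzone prc = nzone pr := by
          rw [hprcz, hz]
          unfold nzone
          rw [← ht]
          simp
        rwa [heq]
      | cons cc TT =>
        obtain ⟨b, hbor, hbp⟩ := brk_cases hb
        have hzpr : nzone pr = zrun z (cc :: TT) := by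
          unfold nzone
          rw [← ht, hz, zrun_append]
        have hgood' : Good (nzone pr) := good_nzone pr
        rw [hbp]
        refine late_mem_hull e he (cc := cc) (TT := TT) hz hprz ?_ ?_ ?_
        · rw [← hzpr]
          rcases hbor with h | h
          · rw [h]
          · rw [h]; linarith [hgood'.1]
        · rw [← hzpr]
          rcases hbor with h | h
          · rw [h]; linarith [hgood'.1]
          · rw [h]
        · rw [← hzpr]

end Main5

end CHOU

namespace CHOU

section Main6

variable {P : Type} [PartialOrder P]
variable (e : ℕ → P) (he : Function.Surjective e)

lemma chX_eq_of_prefix {x u : P} (h : chX e he x <+: chX e he u ∨ chX e he u <+: chX e he x) :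
    x = u := by
  have hx : chX e he x = chA (pat e he x (m e he x)) (m e he x) ++ [lcode e he x] := rfl
  have hu : chX e he u = chA (pat e he u (m e he u)) (m e he u) ++ [lcode e he u] := rfl
  have heq : chX e he x = chX e he u := by
    rcases h with h | h
    · rw [hx, hu] at h
      rw [hx, hu]
      exact prefix_lastodd (chA_even) (lcode_odd e he x) h
    · rw [hx, hu] at h
      rw [hx, hu]
      exact (prefix_lastodd (chA_even) (lcode_odd e he u) h).symm
  rw [hx, hu] at heq
  obtain ⟨_, h2⟩ := List.append_inj' heq rfl
  simp only [List.cons.injEq, and_true] at h2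
  unfold lcode at h2
  exact m_inj e he (by omega)

lemma good_lw {z : Zst} (h : Good z) : z.l ≤ z.l + z.w := by linarith [h.1]

lemma anchor_est0 {z : Zst} (h : Good z) : z.d - 0 < (z.l - 0)^2 := by
  obtain ⟨g1, g2, g3, g4, g5⟩ := h; nlinarith

lemma anchor_est1 {z : Zst} (h : Good z) : z.d - 0 < (z.l - 1)^2 := by
  obtain ⟨g1, g2, g3, g4, g5⟩ := h; nlinarith

lemma escape {x y : P} (hxy : ¬ x ≤ y) :
    q e he x ∉ convexHull ℚ (phi e he y : Set (ℚ×ℚ)) := by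
  have hgx : Good (zX e he x) := good_zX e he x
  set a := (zX e he x).l with ha
  set Δ := (zX e he x).d with hΔ
  have hq : q e he x = (a, gam a - Δ) := rfl
  rw [hq]
  apply sep_line
  intro p hp
  have hgen : ∃ b D, p = (b, gam b - D) ∧ Δ - D < (a - b)^2 := by
    rcases phi_cases e he (Finset.mem_coe.mp hp) with h | h | ⟨s, hs, rfl⟩ | ⟨pr, hpr, hb⟩
    · refine ⟨0, 0, ?_, ?_⟩
      · rw [h]; norm_num [gam]
      · rw [ha, hΔ]; exact anchor_est0 hgx
    · refine ⟨1, 0, ?_, ?_⟩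
      · rw [h]; norm_num [gam]
      · rw [ha, hΔ]; exact anchor_est1 hgx
    · -- leaf point of u = e s with u ≤ y
      obtain ⟨hsy, hars, huy⟩ := (lows_mem e he).mp hs
      set u := e s with hu
      have hgu : Good (zX e he u) := good_zX e he u
      rcases list_dichotomy (chX e he x) (chX e he u) with h | h | ⟨C, c1, c2, T1, T2, h1, h2, hne⟩
      · exfalso
        exact hxy ((chX_eq_of_prefix e he (Or.inl h)) ▸ huy)
      · exfalso
        exact hxy ((chX_eq_of_prefix e he (Or.inr h)) ▸ huy)
      · have hzx : zX e he x = zrun (zrun zroot C) (c1 :: T1) := by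
          rw [zX, h1, zrun_append]
        have hzu : zX e he u = zrun (zrun zroot C) (c2 :: T2) := by
          rw [zX, h2, zrun_append]
        have hgC : Good (zrun zroot C) := good_zrun _ good_root _
        have hest := escape_est (zrun zroot C) hgC hne T1 T2 a ((zX e he u).l)
          (by rw [← hzx]) (by rw [← hzx]; exact good_lw hgx)
          (by rw [← hzu]) (by rw [← hzu]; exact good_lw hgu)
        rw [← hzx, ← hzu] at hest
        exact ⟨(zX e he u).l, (zX e he u).d, rfl, hest⟩
    · -- bracket point
      obtain ⟨hj, hsub, hv, s0, hs0, hs0y⟩ := (nodes_mem e he).mp hpr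
      rcases list_dichotomy (chX e he x) (chA pr.2 pr.1) with h | h | ⟨C, c1, c2, T1, T2, h1, h2, hne⟩
      · exfalso
        have hlx : lcode e he x ∈ chX e he x := by
          unfold chX
          exact List.mem_append_right _ (List.mem_singleton_self _)
        have := h.subset hlx
        obtain ⟨s', _, _, heq⟩ := chA_mem_iff.mp this
        exact lcode_odd e he x (heq ▸ codeZ_even)
      · exfalso
        have hc0 : codeZ pr.2 s0 ∈ chA pr.2 pr.1 :=
          chA_mem_iff.mpr ⟨s0, (hv.1 s0 hs0).1, hs0, rfl⟩
        have := h.subset hc0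
        unfold chX at this
        rcases List.mem_append.mp this with hin | hin
        · obtain ⟨s', hs'1, hs'2, heq⟩ := chA_mem_iff.mp hin
          obtain ⟨hss, hff⟩ := codeZ_inj heq
          subst hss
          have hs0f : s' ∈ pr.2.filter (fun t => t ≤ s') := by
            rw [Finset.mem_filter]; exact ⟨hs0, le_refl _⟩
          rw [← hff] at hs0f
          rw [Finset.mem_filter] at hs0f
          have := (pat_mem e he).mp hs0f.1
          exact hxy (le_trans this.2.2 hs0y)
        · rw [List.mem_singleton] at hin
          exact lcode_odd e he x (hin ▸ codeZ_even)
      · have hzx : zX e he x = zrun (zrun zroot C) (c1 :: T1) := by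
          rw [zX, h1, zrun_append]
        have hzn : nzone pr = zrun (zrun zroot C) (c2 :: T2) := by
          rw [nzone, h2, zrun_append]
        have hgC : Good (zrun zroot C) := good_zrun _ good_root _
        have hgn : Good (nzone pr) := good_nzone pr
        obtain ⟨b, hbor, hbp⟩ := brk_cases hb
        have hbl : (zrun (zrun zroot C) (c2 :: T2)).l ≤ b := by
          rw [← hzn]
          rcases hbor with h | h
          · rw [h]
          · rw [h]; exact good_lw hgn
        have hbr : b ≤ (zrun (zrun zroot C) (c2 :: T2)).l + (zrun (zrun zroot C) (c2 :: T2)).w := by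
          rw [← hzn]
          rcases hbor with h | h
          · rw [h]; exact good_lw hgn
          · rw [h]
        have hest := escape_est (zrun zroot C) hgC hne T1 T2 a b
          (by rw [← hzx]) (by rw [← hzx]; exact good_lw hgx) hbl hbr
        rw [← hzx, ← hzn] at hest
        exact ⟨b, (nzone pr).d, hbp, hest⟩
  obtain ⟨b, D, rfl, hlt⟩ := hgen
  exact tangent_pt hlt

end Main6

end CHOU

open CHOU

/-- The inclusion order on convex hulls of finite sets of points in `ℚ²` is
universal: every countable partial order embeds into it. -/
theorem convexHull_order_universal (P : Type) [PartialOrder P] [Countable P] :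
    ∃ φ : P → Finset (ℚ × ℚ),
      Function.Injective (fun x => convexHull ℚ (φ x : Set (ℚ × ℚ))) ∧
      (∀ x y, x ≤ y ↔
        convexHull ℚ (φ x : Set (ℚ × ℚ)) ⊆ convexHull ℚ (φ y : Set (ℚ × ℚ))) := by
  rcases isEmpty_or_nonempty P with hP | hP
  · refine ⟨fun _ => ∅, ?_, ?_⟩
    · intro x; exact (hP.false x).elim
    · intro x; exact (hP.false x).elim
  · obtain ⟨e, he⟩ := exists_surjective_nat P
    have hiff : ∀ x y : P, x ≤ y ↔
        convexHull ℚ (phi e he x : Set (ℚ × ℚ)) ⊆ convexHull ℚ (phi e he y : Set (ℚ × ℚ)) := by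
      intro x y
      constructor
      · intro hxy
        exact convexHull_min (forward e he hxy) (convex_convexHull ℚ _)
      · intro hsub
        by_contra hxy
        exact escape e he hxy
          (hsub (subset_convexHull ℚ _ (Finset.mem_coe.mpr (qx_mem e he x))))
    refine ⟨phi e he, ?_, hiff⟩
    intro x y h
    simp only at h
    exact le_antisymm ((hiff x y).mpr (le_of_eq h)) ((hiff y x).mpr (le_of_eq h.symm))
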